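/- Let γ: ℝ^q → ℝ^q, γ(a) = A a + b be an affine map with A^m = I for some m ≥ 1, such that γ^m is a translation. If γ has no fixed point, then γ^m is a nontrivial translation; more precisely, writing b = b₁ + b₂ along ℝ^q = ker(A−I) ⊕ ker R(A) (with X^m−1 = (X−1)R(X)), one has b₁ ≠ 0 and there exists v with γ^m(v) = v + m·b₁. -/

import Mathlib

open Matrix

private lemma sum_mulVec' {q : ℕ} (s : Finset ℕ) (f : ℕ → Matrix (Fin q) (Fin q) ℝ)
    (v : Fin q → ℝ) : (∑ i ∈ s, f i) *ᵥ v = ∑ i ∈ s, (f i *ᵥ v) := by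
  induction s using Finset.induction with
  | empty => simp
  | insert _ _ h ih => simp [Finset.sum_insert h, add_mulVec, ih]

/-- Let γ(a) = A a + b be an affine map of ℝ^q with A^m = I (m ≥ 1)
and γ^m a translation. Writing b = b₁ + b₂ along ℝ^q = ker(A−I) ⊕ ker R(A),
if γ has no fixed point then b₁ ≠ 0 and there exists v with γ^m(v) = v + m·b₁. -/
theorem stmt_6 (q : ℕ) (A : Matrix (Fin q) (Fin q) ℝ) (b b₁ b₂ : Fin q → ℝ)
    (γ : (Fin q → ℝ) → (Fin q → ℝ)) (hγ : ∀ a, γ a = A *ᵥ a + b)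
    (m : ℕ) (hm : 1 ≤ m) (hAm : A ^ m = 1)
    (htrans : ∃ c : Fin q → ℝ, ∀ a, γ^[m] a = a + c)
    (hb : b = b₁ + b₂)
    (hb₁ : b₁ ∈ LinearMap.ker (Matrix.toLin' (A - 1)))
    (hb₂ : b₂ ∈ LinearMap.ker (Matrix.toLin' (∑ i ∈ Finset.range m, A ^ i)))
    (hnofix : ∀ a, γ a ≠ a) :
    b₁ ≠ 0 ∧ ∃ v : Fin q → ℝ, γ^[m] v = v + m • b₁ := by
  -- basic facts from kernel membership
  rw [LinearMap.mem_ker, Matrix.toLin'_apply] at hb₁ hb₂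
  have hAb₁ : A *ᵥ b₁ = b₁ := by
    have := hb₁
    rw [sub_mulVec, one_mulVec, sub_eq_zero] at this
    exact this
  have hpow : ∀ i : ℕ, (A ^ i) *ᵥ b₁ = b₁ := by
    intro i
    induction i with
    | zero => simp
    | succ n ih => rw [pow_succ', ← mulVec_mulVec, ih, hAb₁]
  -- R(A) b = m • b₁
  have hRb : (∑ i ∈ Finset.range m, A ^ i) *ᵥ b = m • b₁ := by
    rw [hb, mulVec_add, hb₂, add_zero, sum_mulVec']
    simp [hpow]
  -- iteration formula
  have hiter : ∀ (n : ℕ) (a : Fin q → ℝ),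
      γ^[n] a = (A ^ n) *ᵥ a + (∑ i ∈ Finset.range n, A ^ i) *ᵥ b := by
    intro n
    induction n with
    | zero => intro a; simp
    | succ n ih =>
      intro a
      rw [Function.iterate_succ_apply', ih, hγ, mulVec_add, mulVec_mulVec, ← pow_succ',
        geom_sum_succ, add_mulVec, one_mulVec, mulVec_mulVec, add_assoc]
  -- existence part
  have hexists : ∀ v : Fin q → ℝ, γ^[m] v = v + m • b₁ := by
    intro v
    rw [hiter m v, hAm, one_mulVec, hRb]
  refine ⟨?_, 0, hexists 0⟩
  -- b₁ ≠ 0 : otherwise construct a fixed point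
  intro h0
  have hRb0 : (∑ i ∈ Finset.range m, A ^ i) *ᵥ b = 0 := by
    rw [hRb, h0, smul_zero]
  set c : ℕ → (Fin q → ℝ) := fun k => (∑ i ∈ Finset.range k, A ^ i) *ᵥ b with hc
  have hcsucc : ∀ k, A *ᵥ c k + b = c (k + 1) := by
    intro k
    simp only [hc, geom_sum_succ, add_mulVec, one_mulVec, mulVec_mulVec]
  have hc0 : c 0 = 0 := by simp [hc]
  have hcm : c m = 0 := hRb0
  set v : Fin q → ℝ := (m : ℝ)⁻¹ • ∑ k ∈ Finset.range m, c k with hv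
  have hmne : (m : ℝ) ≠ 0 := by positivity
  apply hnofix v
  rw [hγ]
  have hAv : A *ᵥ v = (m : ℝ)⁻¹ • ∑ k ∈ Finset.range m, (A *ᵥ c k) := by
    rw [hv, mulVec_smul]
    congr 1
    exact map_sum (Matrix.mulVecLin A) c (Finset.range m)
  have key : ∑ k ∈ Finset.range m, c (k + 1) = ∑ k ∈ Finset.range m, c k := by
    have h1 := Finset.sum_range_succ' c m
    have h2 := Finset.sum_range_succ c m
    rw [hc0, add_zero] at h1
    rw [hcm, add_zero] at h2
    rw [← h1, h2]
  have hbsmul : (m : ℝ)⁻¹ • ((m : ℕ) • b) = b := by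
    rw [← Nat.cast_smul_eq_nsmul ℝ, smul_smul, inv_mul_cancel₀ hmne, one_smul]
  calc A *ᵥ v + b = (m : ℝ)⁻¹ • ∑ k ∈ Finset.range m, (A *ᵥ c k + b) := by
        rw [hAv, Finset.sum_add_distrib, smul_add, Finset.sum_const, Finset.card_range, hbsmul]
    _ = (m : ℝ)⁻¹ • ∑ k ∈ Finset.range m, c (k + 1) := by simp_rw [hcsucc]
    _ = v := by rw [key, hv]
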